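/- Let a, b be unit vectors in ℝ³ and let η_a, α_a, η_b, α_b be real numbers. For the two-qubit triplet state ψ = (e₊⊗e₋ + e₋⊗e₊)/√2, the correlation function Ẽ(a, b) = ⟨ψ, ((M^A₊(a) − M^A₋(a)) ⊗ (M^B₊(b) − M^B₋(b))) ψ⟩ equals η_a·η_b + α_a·α_b·(a_x b_x + a_y b_y − a_z b_z), where M^A_±(a) = ((1±η_a)I ± α_a σ·a)/2 and M^B_±(b) = ((1±η_b)I ± α_b σ·b)/2. Equivalently, writing 𝑎̸ := (a_x, a_y, −a_z) for the reflection of a through the xy-plane, Ẽ(𝑎̸, b) = η_a·η_b + α_a·α_b·(a·b). -/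

import Mathlib

open scoped Matrix Kronecker RealInnerProductSpace

noncomputable section

/-- The Pauli matrix σx. -/
def σx : Matrix (Fin 2) (Fin 2) ℂ := !![0, 1; 1, 0]

/-- The Pauli matrix σy. -/
def σy : Matrix (Fin 2) (Fin 2) ℂ := !![0, -Complex.I; Complex.I, 0]

/-- The Pauli matrix σz. -/
def σz : Matrix (Fin 2) (Fin 2) ℂ := !![1, 0; 0, -1]

/-- σ·v for v ∈ ℝ³. -/
def pauliDot (v : EuclideanSpace ℝ (Fin 3)) : Matrix (Fin 2) (Fin 2) ℂ :=
  (v 0 : ℂ) • σx + (v 1 : ℂ) • σy + (v 2 : ℂ) • σz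

/-- The biased unsharp POVM element M₊(n) = ((1+η)·I + α·(σ·n))/2. -/
def Mplus (η α : ℝ) (n : EuclideanSpace ℝ (Fin 3)) : Matrix (Fin 2) (Fin 2) ℂ :=
  (1/2 : ℂ) • (((1 + η : ℝ) : ℂ) • (1 : Matrix (Fin 2) (Fin 2) ℂ) + (α : ℂ) • pauliDot n)

/-- The biased unsharp POVM element M₋(n) = ((1−η)·I − α·(σ·n))/2. -/
def Mminus (η α : ℝ) (n : EuclideanSpace ℝ (Fin 3)) : Matrix (Fin 2) (Fin 2) ℂ :=
  (1/2 : ℂ) • (((1 - η : ℝ) : ℂ) • (1 : Matrix (Fin 2) (Fin 2) ℂ) - (α : ℂ) • pauliDot n)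

/-- The two-qubit spin-triplet state with zero z-component, (e₊⊗e₋ + e₋⊗e₊)/√2 ∈ ℂ²⊗ℂ². -/
def triplet : Fin 2 × Fin 2 → ℂ := fun p =>
  if p = (0, 1) then ((Real.sqrt 2 : ℝ)⁻¹ : ℂ)
  else if p = (1, 0) then ((Real.sqrt 2 : ℝ)⁻¹ : ℂ)
  else 0

/-- The reflection 𝑎̸ = (a_x, a_y, −a_z) of a vector a ∈ ℝ³ through the xy-plane. -/
def slash (a : EuclideanSpace ℝ (Fin 3)) : EuclideanSpace ℝ (Fin 3) :=
  (WithLp.equiv 2 (Fin 3 → ℝ)).symm ![a 0, a 1, -(a 2)]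

lemma key (x y : EuclideanSpace ℝ (Fin 3)) (ηa αa ηb αb : ℝ) :
    star triplet ⬝ᵥ
        (((Mplus ηa αa x - Mminus ηa αa x) ⊗ₖ (Mplus ηb αb y - Mminus ηb αb y)) *ᵥ triplet)
      = ((ηa * ηb + αa * αb * (x 0 * y 0 + x 1 * y 1 - x 2 * y 2) : ℝ) : ℂ) := by
  have h2 : ((Real.sqrt 2 : ℝ) : ℂ)⁻¹ * ((Real.sqrt 2 : ℝ) : ℂ)⁻¹ = 1/2 := by
    rw [← mul_inv, ← Complex.ofReal_mul,
      Real.mul_self_sqrt (by norm_num : (0:ℝ) ≤ 2)]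
    norm_num
  simp only [dotProduct, Matrix.mulVec, Fintype.sum_prod_type, Fin.sum_univ_two,
    Matrix.kroneckerMap_apply, triplet, Mplus, Mminus, pauliDot, σx, σy, σz,
    Matrix.sub_apply, Matrix.add_apply, Matrix.smul_apply, Matrix.one_apply,
    Matrix.cons_val', Matrix.cons_val_zero, Matrix.cons_val_one, Matrix.head_cons,
    Matrix.empty_val', Matrix.cons_val_fin_one, Matrix.head_fin_const,
    Pi.star_apply, star_zero, smul_eq_mul]
  norm_num [Prod.ext_iff]
  ring_nf
  rw [show ((Real.sqrt 2:ℝ):ℂ)⁻¹ ^ 2 = 1/2 by rw [sq]; exact h2, Complex.I_sq]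
  ring

theorem stmt_17 (a b : EuclideanSpace ℝ (Fin 3)) (ha : ‖a‖ = 1) (hb : ‖b‖ = 1)
    (ηa αa ηb αb : ℝ) :
    star triplet ⬝ᵥ
        (((Mplus ηa αa a - Mminus ηa αa a) ⊗ₖ (Mplus ηb αb b - Mminus ηb αb b)) *ᵥ triplet)
      = ((ηa * ηb + αa * αb * (a 0 * b 0 + a 1 * b 1 - a 2 * b 2) : ℝ) : ℂ) ∧
    star triplet ⬝ᵥ
        (((Mplus ηa αa (slash a) - Mminus ηa αa (slash a)) ⊗ₖ
            (Mplus ηb αb b - Mminus ηb αb b)) *ᵥ triplet)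
      = ((ηa * ηb + αa * αb * ⟪a, b⟫ : ℝ) : ℂ) := by
  refine ⟨key a b ηa αa ηb αb, ?_⟩
  rw [key (slash a) b ηa αa ηb αb]
  norm_cast
  simp [slash, PiLp.inner_apply, Fin.sum_univ_three]
  left; ring

end
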